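/- Let V be a nonzero finite-dimensional commutative unital real algebra of dimension at least 2 possessing a positive definite associative symmetric bilinear form. Then there exists an idempotent c in V with c ≠ 0 and c ≠ e, where e is the unit. -/

import Mathlib

/-- a commutative unital real algebra of dimension ≥ 2 with positive
definite associative symmetric bilinear form contains an idempotent distinct from 0 and
from the unit. -/
theorem stmt_9 {V : Type*} [AddCommGroup V] [Module ℝ V] [FiniteDimensional ℝ V]
    (mul : V →ₗ[ℝ] V →ₗ[ℝ] V) (hcomm : ∀ x y, mul x y = mul y x)
    (B : V →ₗ[ℝ] V →ₗ[ℝ] ℝ) (hsymm : ∀ x y, B x y = B y x)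
    (hassoc : ∀ x y z, B (mul x y) z = B x (mul y z))
    (hpos : ∀ x, x ≠ 0 → 0 < B x x)
    (e : V) (he : ∀ x, mul e x = x)
    (hdim : 2 ≤ Module.finrank ℝ V) :
    ∃ c, mul c c = c ∧ c ≠ 0 ∧ c ≠ e := by
  -- symmetry of the trilinear form in the last two arguments
  have hT23 : ∀ x y z, B (mul x y) z = B (mul x z) y := by
    intro x y z
    rw [hassoc, hcomm y z, ← hassoc]
  -- inner product space structure induced by B
  letI core : InnerProductSpace.Core ℝ V :=
    { inner := fun x y => B x y
      conj_inner_symm := fun x y => by simpa using hsymm y x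
      re_inner_nonneg := fun x => by
        by_cases hx : x = 0
        · simp [hx]
        · exact le_of_lt (by simpa using hpos x hx)
      add_left := fun x y z => by simp
      smul_left := fun x y r => by simp
      definite := fun x hx => by
        by_contra h
        exact absurd hx (ne_of_gt (by simpa using hpos x h)) }
  letI : NormedAddCommGroup V := core.toNormedAddCommGroup
  letI : InnerProductSpace ℝ V := InnerProductSpace.ofCore core.toCore
  have hnorm : ∀ x : V, ‖x‖ ^ 2 = B x x := fun x => by
    have : (inner ℝ x x : ℝ) = B x x := rfl
    rw [← this]; exact (real_inner_self_eq_norm_sq x).symm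
  -- the unit is nonzero
  have hV : Nontrivial V := Module.finrank_pos_iff (R := ℝ).mp (by omega)
  have he0 : e ≠ 0 := by
    intro h
    obtain ⟨x, y, hxy⟩ := hV
    apply hxy
    have hx := he x; have hy := he y
    rw [h] at hx hy
    simp only [map_zero, LinearMap.zero_apply] at hx hy
    rw [← hx, ← hy]
  have hene : (0:ℝ) < ‖e‖ := norm_pos_iff.mpr he0
  -- the cubic form F and its continuity
  set F : V → ℝ := fun x => B (mul x x) x with hFdef
  have hFc : Continuous F := by
    have h1 : Continuous fun x : V => (LinearMap.toContinuousLinearMap (mul x) : V →L[ℝ] V) :=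
      (LinearMap.toContinuousLinearMap.toLinearMap.comp mul).continuous_of_finiteDimensional
    have hm : Continuous fun x : V => mul x x := h1.clm_apply continuous_id
    have h2 : Continuous fun x : V =>
        (LinearMap.toContinuousLinearMap (B (mul x x)) : V →L[ℝ] ℝ) :=
      ((LinearMap.toContinuousLinearMap.toLinearMap.comp B).continuous_of_finiteDimensional).comp hm
    exact h2.clm_apply continuous_id
  -- F is cubic homogeneous
  have hFh : ∀ (r : ℝ) (x : V), F (r • x) = r ^ 3 * F x := by
    intro r x
    simp only [hFdef, map_smul, LinearMap.smul_apply, smul_eq_mul]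
    ring
  -- maximize F on the unit sphere
  have hsphne : (Metric.sphere (0:V) 1).Nonempty := by
    refine ⟨‖e‖⁻¹ • e, ?_⟩
    rw [mem_sphere_zero_iff_norm, norm_smul, norm_inv, norm_norm]
    field_simp
  obtain ⟨c0, hc0mem, hc0max⟩ :=
    (isCompact_sphere (0:V) 1).exists_isMaxOn hsphne hFc.continuousOn
  rw [mem_sphere_zero_iff_norm] at hc0mem
  have hc0B : B c0 c0 = 1 := by rw [← hnorm, hc0mem]; norm_num
  have hc0ne : c0 ≠ 0 := by
    intro h; rw [h] at hc0B; simp at hc0B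
  set lam : ℝ := F c0 with hlamdef
  have hmax : ∀ y : V, ‖y‖ = 1 → F y ≤ lam := by
    intro y hy
    exact hc0max (mem_sphere_zero_iff_norm.mpr hy)
  -- lam > 0
  have hlam : 0 < lam := by
    have h1 : F (‖e‖⁻¹ • e) ≤ lam := hmax _ (by
      rw [norm_smul, norm_inv, norm_norm]; field_simp)
    have h2 : F e = ‖e‖ ^ 2 := by
      simp only [hFdef, he e]
      rw [← hnorm]
    have h3 : F (‖e‖⁻¹ • e) = ‖e‖⁻¹ := by
      rw [hFh, h2, inv_pow]
      field_simp
    rw [h3] at h1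
    exact lt_of_lt_of_le (by positivity) h1
  -- the key global inequality F(x)² ≤ lam² (B x x)³
  have hkey : ∀ x : V, (F x) ^ 2 ≤ lam ^ 2 * (B x x) ^ 3 := by
    intro x
    by_cases hx : x = 0
    · simp [hx, hFdef]
    · have hr : (0:ℝ) < ‖x‖ := norm_pos_iff.mpr hx
      set r : ℝ := ‖x‖ with hrdef
      have hy : ‖r⁻¹ • x‖ = 1 := by
        rw [norm_smul, norm_inv, Real.norm_eq_abs, abs_of_pos hr]
        field_simp
        exact hrdef.symm
      have h1 : F (r⁻¹ • x) ≤ lam := hmax _ hy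
      have h2 : F (-(r⁻¹ • x)) ≤ lam := hmax _ (by rw [norm_neg]; exact hy)
      rw [show -(r⁻¹ • x) = (-r⁻¹) • x by rw [neg_smul]] at h2
      rw [hFh] at h1 h2
      have h3 : (r⁻¹ ^ 3 * F x) ^ 2 ≤ lam ^ 2 := by
        apply sq_le_sq' _ h1
        nlinarith [h2]
      have h4 : B x x = r ^ 2 := (hnorm x).symm
      have h5 : F x = (r⁻¹ ^ 3 * F x) * r ^ 3 := by
        field_simp
      have h6 : (F x) ^ 2 = (r⁻¹ ^ 3 * F x) ^ 2 * (r ^ 3) ^ 2 := by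
        rw [← mul_pow, ← h5]
      rw [h4, h6]
      calc (r⁻¹ ^ 3 * F x) ^ 2 * (r ^ 3) ^ 2 ≤ lam ^ 2 * (r ^ 3) ^ 2 :=
            mul_le_mul_of_nonneg_right h3 (by positivity)
        _ = lam ^ 2 * (r ^ 2) ^ 3 := by ring
  -- expansions along lines through c0
  have hNexp : ∀ (v : V) (t : ℝ), B (c0 + t • v) (c0 + t • v)
      = 1 + 2 * B c0 v * t + B v v * t ^ 2 := by
    intro v t
    simp only [map_add, map_smul, LinearMap.add_apply, LinearMap.smul_apply, smul_eq_mul]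
    rw [hc0B, hsymm v c0]
    ring
  have hFexp : ∀ (v : V) (t : ℝ), F (c0 + t • v)
      = lam + 3 * B (mul c0 c0) v * t + 3 * B (mul c0 v) v * t ^ 2 + F v * t ^ 3 := by
    intro v t
    have hlc : lam = B (mul c0 c0) c0 := rfl
    have hvv : B (mul v v) c0 = B (mul c0 v) v := by
      rw [hT23 v v c0, hcomm v c0]
    simp only [hFdef, map_add, map_smul, LinearMap.add_apply, LinearMap.smul_apply, smul_eq_mul]
    rw [hcomm v c0, hT23 c0 v c0, hvv, ← hlc]
    ring
  -- first-order condition at the maximum: B (c0*c0) v = lam * B c0 v for all v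
  have hfo : ∀ v : V, B (mul c0 c0) v = lam * B c0 v := by
    intro v
    set s : ℝ := B c0 v with hs
    set q : ℝ := B v v with hq
    set al : ℝ := B (mul c0 c0) v with hal
    set be : ℝ := B (mul c0 v) v with hbe
    set ga : ℝ := F v with hga
    set G : ℝ → ℝ := fun t =>
      lam ^ 2 * (1 + 2 * s * t + q * t ^ 2) ^ 3
        - (lam + 3 * al * t + 3 * be * t ^ 2 + ga * t ^ 3) ^ 2 with hG
    have hG0 : ∀ t, G 0 ≤ G t := by
      intro t
      have h1 := hkey (c0 + t • v)
      rw [hNexp v t, hFexp v t] at h1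
      have h2 : G 0 = 0 := by simp [hG]
      rw [h2, hG]
      dsimp only
      linarith
    have hmin : IsLocalMin G 0 := Filter.Eventually.of_forall hG0
    have hp : HasDerivAt (fun t : ℝ => 1 + 2 * s * t + q * t ^ 2) (2 * s) 0 := by
      have h1 : HasDerivAt (fun t : ℝ => 1 + 2 * s * t + q * t ^ 2)
          (2 * s * 1 + q * (2 * 0 ^ 1)) 0 :=
        (((hasDerivAt_id (0:ℝ)).const_mul (2*s)).const_add 1).add
          ((hasDerivAt_pow 2 (0:ℝ)).const_mul q)
      simpa using h1
    have hf : HasDerivAt (fun t : ℝ => lam + 3 * al * t + 3 * be * t ^ 2 + ga * t ^ 3)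
        (3 * al) 0 := by
      have h1 : HasDerivAt (fun t : ℝ => lam + 3 * al * t + 3 * be * t ^ 2 + ga * t ^ 3)
          (3 * al * 1 + 3 * be * (2 * 0 ^ 1) + ga * (3 * 0 ^ 2)) 0 :=
        ((((hasDerivAt_id (0:ℝ)).const_mul (3*al)).const_add lam).add
          ((hasDerivAt_pow 2 (0:ℝ)).const_mul (3*be))).add
          ((hasDerivAt_pow 3 (0:ℝ)).const_mul ga)
      simpa using h1
    have hG' : HasDerivAt G (lam ^ 2 * (6 * s) - lam * (6 * al)) 0 := by
      have h1 := ((hp.pow 3).const_mul (lam ^ 2)).sub (hf.pow 2)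
      simp only [Nat.cast_ofNat, Nat.sub_self] at h1
      refine HasDerivAt.congr_deriv (f := G) h1 ?_
      norm_num
      ring
    have hd0 : lam ^ 2 * (6 * s) - lam * (6 * al) = 0 := by
      rw [← hG'.deriv]
      exact hmin.deriv_eq_zero
    have h1 : lam * (6 * (lam * s - al)) = 0 := by linarith [hd0]
    have h2 : lam * s - al = 0 := by
      rcases mul_eq_zero.mp h1 with h | h
      · exact absurd h (ne_of_gt hlam)
      · linarith [mul_eq_zero.mp h |>.elim (by norm_num) id]
    linarith
  -- hence c0 * c0 = lam • c0
  have hidem : mul c0 c0 = lam • c0 := by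
    set w : V := mul c0 c0 - lam • c0 with hw
    have hwz : B w w = 0 := by
      have h1 : B w w = B (mul c0 c0) w - lam * B c0 w := by
        rw [hw]
        simp only [map_sub, map_smul, LinearMap.sub_apply, LinearMap.smul_apply, smul_eq_mul]
        ring
      rw [h1, hfo w]
      ring
    by_contra h
    have hwne : w ≠ 0 := fun hh => h (by rwa [sub_eq_zero] at hh)
    exact absurd hwz (ne_of_gt (hpos w hwne))
  -- the idempotent is lam⁻¹ • c0
  refine ⟨lam⁻¹ • c0, ?_, ?_, ?_⟩
  · simp only [map_smul, LinearMap.smul_apply]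
    rw [hidem, smul_smul, smul_smul]
    congr 1
    field_simp
  · simp only [ne_eq, smul_eq_zero, inv_eq_zero, not_or]
    exact ⟨ne_of_gt hlam, hc0ne⟩
  · -- suppose lam⁻¹ • c0 = e; derive a contradiction
    intro hce
    have hc0e : c0 = lam • e := by
      rw [← hce, smul_smul, mul_inv_cancel₀ (ne_of_gt hlam), one_smul]
    -- find v ≠ 0 orthogonal to e
    obtain ⟨v0, hv0mem, hv0ne⟩ : ∃ v ∈ LinearMap.ker (B e), v ≠ 0 := by
      apply Submodule.exists_mem_ne_zero_of_ne_bot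
      intro hbot
      have h1 := LinearMap.finrank_range_add_finrank_ker (B e)
      rw [hbot, finrank_bot] at h1
      have h2 : Module.finrank ℝ (LinearMap.range (B e)) ≤ Module.finrank ℝ ℝ :=
        Submodule.finrank_le _
      rw [Module.finrank_self] at h2
      omega
    have hv0orth : B e v0 = 0 := hv0mem
    -- arrange F v ≥ 0
    obtain ⟨v, hvne, hvorth, hvga⟩ : ∃ v : V, v ≠ 0 ∧ B e v = 0 ∧ 0 ≤ F v := by
      rcases le_or_gt 0 (F v0) with h | h
      · exact ⟨v0, hv0ne, hv0orth, h⟩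
      · refine ⟨-v0, neg_ne_zero.mpr hv0ne, by rw [map_neg, hv0orth, neg_zero], ?_⟩
        have hneg : F (-v0) = -F v0 := by
          rw [show (-v0 : V) = (-1 : ℝ) • v0 by simp, hFh]
          ring
        rw [hneg]; linarith
    clear_value F lam
    have hqpos : 0 < B v v := hpos v hvne
    set q : ℝ := B v v with hq
    -- compute the coefficients for this v
    have hs0 : B c0 v = 0 := by
      rw [hc0e, map_smul, LinearMap.smul_apply, smul_eq_mul, hvorth, mul_zero]
    have hal0 : B (mul c0 c0) v = 0 := by rw [hfo v, hs0, mul_zero]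
    have hbe0 : B (mul c0 v) v = lam * q := by
      rw [hc0e, map_smul, LinearMap.smul_apply, map_smul, LinearMap.smul_apply,
        he v, smul_eq_mul, hq]
    -- the inequality at a well-chosen point contradicts maximality
    set t : ℝ := (1 + q)⁻¹ with ht
    have htpos : 0 < t := by rw [ht]; positivity
    have ht1 : t ≤ 1 := by
      rw [ht, inv_le_one_iff₀]
      right; linarith
    have hqt : q * t ≤ 1 := by
      rw [ht, ← div_eq_mul_inv, div_le_one (by positivity)]
      linarith
    have h1 := hkey (c0 + t • v)
    rw [hNexp v t, hFexp v t, hs0, hal0, hbe0] at h1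
    set u : ℝ := q * t ^ 2 with hu
    have hupos : 0 < u := by positivity
    have hu1 : u ≤ t := by
      calc u = (q * t) * t := by rw [hu]; ring
        _ ≤ 1 * t := mul_le_mul_of_nonneg_right hqt (le_of_lt htpos)
        _ = t := one_mul t
    have hule : u ≤ 1 := le_trans hu1 ht1
    have hL : 0 ≤ lam * (1 + 3 * u) := by positivity
    have hstep : lam * (1 + 3 * u) ≤ lam + 3 * 0 * t + 3 * (lam * q) * t ^ 2 + F v * t ^ 3 := by
      have h2 : lam * (1 + 3 * u) = lam + 3 * 0 * t + 3 * (lam * q) * t ^ 2 := by rw [hu]; ring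
      have h3 : 0 ≤ F v * t ^ 3 := mul_nonneg hvga (by positivity)
      linarith
    have h2 : (lam * (1 + 3 * u)) ^ 2
        ≤ (lam + 3 * 0 * t + 3 * (lam * q) * t ^ 2 + F v * t ^ 3) ^ 2 :=
      pow_le_pow_left₀ hL hstep 2
    have h3 : lam ^ 2 * (1 + 2 * 0 * t + q * t ^ 2) ^ 3 = lam ^ 2 * (1 + u) ^ 3 := by
      rw [hu]; ring
    rw [h3] at h1
    have h4 : lam ^ 2 * (1 + 3 * u) ^ 2 ≤ lam ^ 2 * (1 + u) ^ 3 := by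
      have h5 : (lam * (1 + 3 * u)) ^ 2 = lam ^ 2 * (1 + 3 * u) ^ 2 := by ring
      linarith [le_trans h2 h1]
    have h6 : (1 + 3 * u) ^ 2 ≤ (1 + u) ^ 3 :=
      (mul_le_mul_iff_of_pos_left (by positivity : (0:ℝ) < lam ^ 2)).mp h4
    have h7 : u ^ 3 ≤ u ^ 2 := by
      calc u ^ 3 = u ^ 2 * u := by ring
        _ ≤ u ^ 2 * 1 := mul_le_mul_of_nonneg_left hule (sq_nonneg u)
        _ = u ^ 2 := mul_one _
    have h8 : 1 + 6 * u + 9 * u ^ 2 ≤ 1 + 3 * u + 3 * u ^ 2 + u ^ 3 := by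
      have e1 : (1 + 3 * u) ^ 2 = 1 + 6 * u + 9 * u ^ 2 := by ring
      have e2 : (1 + u) ^ 3 = 1 + 3 * u + 3 * u ^ 2 + u ^ 3 := by ring
      rw [e1, e2] at h6
      exact h6
    linarith only [h7, h8, hupos, sq_nonneg u]
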